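/- Let k be a field, U a symmetric n × n matrix with entries in K_∞ = k((t^{-1})), and a, b, s integers with b > 0 and s ≥ 0. Let ν(a,b) denote the k-dimension of the space of x ∈ k[t]^n with |x| < 2^a and ‖Ux‖ < 2^{-b}, where ‖y‖ denotes the absolute value of the fractional (negative-degree) part of y, extended to vectors by the maximum. Then ν(a,b) ≤ ν(a-s, b+s) + ns + n·max(⌊(a-b)/2⌋, 0). -/

import Mathlib

/- Geometry of numbers over `K∞ = k((t⁻¹))`, modelled as formal Laurent series in the
variable `X = t⁻¹`.  Under this identification `ord(f) = -(f.order)`, the absolute value is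
`|f| = 2^(ord f)`, and `k[t]` embeds via `t ↦ X⁻¹`, with `ord` of a polynomial equal to its
degree. -/

open scoped Classical

set_option maxHeartbeats 1000000
set_option synthInstance.maxHeartbeats 400000

noncomputable section

variable {k : Type*} [Field k]

/-- The element `t` of `K∞ = k((t⁻¹))`. -/
def tvar (k : Type*) [Field k] : LaurentSeries k := HahnSeries.single (-1 : ℤ) 1

/-- The embedding `k[t] → K∞`. -/
def polyEmb (k : Type*) [Field k] : Polynomial k →+* LaurentSeries k :=
  (Polynomial.aeval (tvar k)).toRingHom

variable {n : ℕ}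

/-- The (full) `k[t]`-lattice spanned by the vectors `x 0, …, x (n-1)` in `K∞ⁿ`. -/
def lattice (x : Fin n → Fin n → LaurentSeries k) : Set (Fin n → LaurentSeries k) :=
  {v | ∃ u : Fin n → Polynomial k, v = ∑ i, polyEmb k (u i) • x i}

/-- `k(t)`-linear independence of vectors in `K∞ⁿ`, phrased (equivalently, by clearing
denominators) via polynomial relations. -/
def PolyIndep (x : Fin n → Fin n → LaurentSeries k) : Prop :=
  ∀ u : Fin n → Polynomial k, ∑ i, polyEmb k (u i) • x i = 0 → ∀ i, u i = 0

/-- `|w| < 2^R` for a vector `w ∈ K∞ⁿ`, where `|w| = max_j 2^(ord (w j))`. -/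
def NormLt (w : Fin n → LaurentSeries k) (R : ℤ) : Prop :=
  ∀ j, w j = 0 ∨ -R < (w j).order

/-- Membership of `w` in the `k(t)`-span of the vectors `x j`, `j ∈ s` (phrased by clearing
denominators). -/
def InRatSpan (x : Fin n → Fin n → LaurentSeries k) (s : Set (Fin n))
    (w : Fin n → LaurentSeries k) : Prop :=
  ∃ q : Polynomial k, q ≠ 0 ∧ ∃ u : Fin n → Polynomial k,
    polyEmb k q • w = ∑ i, if i ∈ s then polyEmb k (u i) • x i else 0

/-- `σ 0 ≤ … ≤ σ (n-1)` are the successive minima of the lattice spanned by `x`: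
there are lattice vectors `v i` with `|v i| = 2^(σ i)`, each `v i` outside the `k(t)`-span of
the previous ones, such that every lattice vector outside the span of `v 0, …, v (i-1)` has
absolute value at least `2^(σ i)`. -/
def AreSuccessiveMinima (x : Fin n → Fin n → LaurentSeries k) (σ : Fin n → ℤ) : Prop :=
  Monotone σ ∧
  ∃ v : Fin n → Fin n → LaurentSeries k,
    (∀ i, v i ∈ lattice x) ∧
    (∀ i, ¬ InRatSpan v {j | j < i} (v i)) ∧
    (∀ i, NormLt (v i) (σ i + 1) ∧ ¬ NormLt (v i) (σ i)) ∧
    (∀ i, ∀ w ∈ lattice x, ¬ InRatSpan v {j | j < i} w → ¬ NormLt w (σ i))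

/-- The space of `x ∈ k[t]ⁿ` with `|x| < 2^a` and `‖U x‖ < 2^(-b)`, where `‖y‖` is the absolute
value of the fractional part of `y` (so `‖y‖ < 2^(-b)` means that the coefficients of
`t^(-1), …, t^(-b)`, i.e. the `X`-coefficients in degrees `1, …, b`, all vanish), extended to
vectors by taking the maximum. -/
def shrinkSet (U : Matrix (Fin n) (Fin n) (LaurentSeries k)) (a b : ℤ) :
    Set (Fin n → Polynomial k) :=
  {x | (∀ i, ∀ j : ℕ, a ≤ (j : ℤ) → (x i).coeff j = 0) ∧
       (∀ i, ∀ j : ℤ, 1 ≤ j → j ≤ b → (∑ l, U i l * polyEmb k (x l)).coeff j = 0)}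


namespace ShrinkingAux

-- auxiliary lemmas
lemma sum_coeff {α : Type*} (s : Finset α) (f : α → LaurentSeries k) (d : ℤ) :
    (∑ i ∈ s, f i).coeff d = ∑ i ∈ s, (f i).coeff d := by
  induction s using Finset.cons_induction with
  | empty => simp
  | cons a s ha ih => rw [Finset.sum_cons, Finset.sum_cons, HahnSeries.coeff_add, ih]

lemma tvar_pow (m : ℕ) : (tvar k) ^ m = HahnSeries.single (-(m : ℤ)) 1 := by
  induction m with
  | zero => simp [HahnSeries.single_zero_one]
  | succ m ih =>
      rw [pow_succ, ih, tvar, HahnSeries.single_mul_single, one_mul,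
        show (-(m : ℤ)) + -1 = -(((m + 1 : ℕ)) : ℤ) by push_cast; ring]

lemma algebraMap_laurent (c : k) :
    algebraMap k (LaurentSeries k) c = HahnSeries.single (0 : ℤ) c := by
  rw [HahnSeries.algebraMap_apply']
  rw [show algebraMap k (PowerSeries k) c = PowerSeries.C c from rfl]
  rw [HahnSeries.ofPowerSeries_C, HahnSeries.C_apply]

lemma polyEmb_smul (c : k) (p : Polynomial k) :
    polyEmb k (c • p) = c • polyEmb k p := by
  have h1 : c • p = Polynomial.C c * p := by rw [Polynomial.smul_eq_C_mul]
  have h2 : c • polyEmb k p = HahnSeries.single (0 : ℤ) c * polyEmb k p := by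
    rw [HahnSeries.single_zero_mul_eq_smul]
  rw [h1, h2, map_mul]
  congr 1
  rw [show (polyEmb k) (Polynomial.C c) = Polynomial.aeval (tvar k) (Polynomial.C c) from rfl,
    Polynomial.aeval_C, algebraMap_laurent]

lemma polyEmb_coeff (p : Polynomial k) (d : ℤ) :
    (polyEmb k p).coeff d = if d ≤ 0 then p.coeff (-d).toNat else 0 := by
  have h : polyEmb k p = ∑ i ∈ Finset.range (p.natDegree + 1),
      algebraMap k (LaurentSeries k) (p.coeff i) * (tvar k) ^ i := by
    rw [show (polyEmb k) p = Polynomial.aeval (tvar k) p from rfl, Polynomial.aeval_def,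
      Polynomial.eval₂_eq_sum_range]
  rw [h, sum_coeff]
  have hterm : ∀ i : ℕ, (algebraMap k (LaurentSeries k) (p.coeff i) * (tvar k) ^ i).coeff d
      = if d = -(i : ℤ) then p.coeff i else 0 := by
    intro i
    rw [tvar_pow, algebraMap_laurent,
      HahnSeries.single_mul_single, zero_add, mul_one, HahnSeries.coeff_single]
    by_cases hc : d = -(i : ℤ) <;> simp [hc]
  simp only [hterm]
  by_cases hd : d ≤ 0
  · rw [if_pos hd]
    have : ∀ i ∈ Finset.range (p.natDegree + 1),
        (if d = -(i : ℤ) then p.coeff i else 0) = if i = (-d).toNat then p.coeff i else 0 := by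
      intro i _
      exact if_congr (by omega) rfl rfl
    rw [Finset.sum_congr rfl this, Finset.sum_ite_eq' (Finset.range (p.natDegree + 1))]
    split
    · rfl
    · rename_i hmem
      exact (Polynomial.coeff_eq_zero_of_natDegree_lt (by
        simp only [Finset.mem_range] at hmem; omega)).symm
  · rw [if_neg hd]
    apply Finset.sum_eq_zero
    intro i _
    rw [if_neg (by omega)]

lemma polyEmb_eq_sum_single (p : Polynomial k) (N : ℕ) (hp : ∀ j : ℕ, N ≤ j → p.coeff j = 0) :
    polyEmb k p = ∑ e ∈ Finset.range N, HahnSeries.single (-(e : ℤ)) (p.coeff e) := by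
  ext d
  rw [sum_coeff, polyEmb_coeff]
  have hterm : ∀ e ∈ Finset.range N,
      (HahnSeries.single (-(e : ℤ)) (p.coeff e)).coeff d
        = if e = (-d).toNat ∧ d ≤ 0 then p.coeff e else 0 := by
    intro e _
    rw [HahnSeries.coeff_single]
    by_cases hc : d = -(e : ℤ)
    · rw [if_pos hc, if_pos (by omega)]
    · rw [if_neg hc, if_neg (by omega)]
  rw [Finset.sum_congr rfl hterm]
  by_cases hd : d ≤ 0
  · simp only [hd, and_true, if_pos hd]
    rw [Finset.sum_ite_eq' (Finset.range N)]
    by_cases hmem : (-d).toNat ∈ Finset.range N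
    · rw [if_pos hmem]
      simp
    · rw [if_neg hmem]
      simp only [Finset.mem_range, not_lt] at hmem
      exact hp _ hmem
  · simp only [hd, and_false, if_neg hd, if_false]
    exact (Finset.sum_const_zero).symm

/-- The key coefficient computation. -/
lemma mul_coeff_key (a b : ℤ) (ha : 1 ≤ a) (hab : a ≤ b + 1)
    (p : Polynomial k) (hp : ∀ j : ℕ, a ≤ (j : ℤ) → p.coeff j = 0)
    (S : LaurentSeries k) (hS : ∀ j : ℤ, 1 ≤ j → j ≤ b → S.coeff j = 0) :
    (polyEmb k p * S).coeff (b + 2 - a) = p.coeff (a - 1).toNat * S.coeff (b + 1) := by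
  rw [polyEmb_eq_sum_single p a.toNat (fun j hj => hp j (by omega)), Finset.sum_mul, sum_coeff]
  have hterm : ∀ e ∈ Finset.range a.toNat,
      (HahnSeries.single (-(e : ℤ)) (p.coeff e) * S).coeff (b + 2 - a)
        = p.coeff e * S.coeff (b + 2 - a + e) := by
    intro e _
    calc (HahnSeries.single (-(e : ℤ)) (p.coeff e) * S).coeff (b + 2 - a)
        = (HahnSeries.single (-(e : ℤ)) (p.coeff e) * S).coeff ((b + 2 - a + e) + (-(e : ℤ))) := by
          congr 1
          ring
      _ = p.coeff e * S.coeff (b + 2 - a + e) := HahnSeries.coeff_single_mul_add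
  rw [Finset.sum_congr rfl hterm]
  rw [Finset.sum_eq_single_of_mem (a - 1).toNat (by simp only [Finset.mem_range]; omega)]
  · have harg : b + 2 - a + (((a - 1).toNat : ℕ) : ℤ) = b + 1 := by omega
    rw [harg]
  · intro e he hne
    simp only [Finset.mem_range] at he
    rw [hS (b + 2 - a + e) (by omega) (by omega), mul_zero]

/-- Symmetric swap. -/
lemma swap_sum (U : Matrix (Fin n) (Fin n) (LaurentSeries k)) (hU : U.IsSymm)
    (x y : Fin n → Polynomial k) :
    ∑ i, polyEmb k (y i) * (∑ l, U i l * polyEmb k (x l))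
      = ∑ i, polyEmb k (x i) * (∑ l, U i l * polyEmb k (y l)) := by
  simp only [Finset.mul_sum]
  rw [Finset.sum_comm]
  refine Finset.sum_congr rfl fun l _ => Finset.sum_congr rfl fun i _ => ?_
  rw [hU.apply l i]
  ring

/-- The symplectic pairing identity. -/
lemma pairing (U : Matrix (Fin n) (Fin n) (LaurentSeries k)) (hU : U.IsSymm)
    (a b : ℤ) (ha : 1 ≤ a) (hab : a ≤ b + 1)
    (x y : Fin n → Polynomial k)
    (hx1 : ∀ i, ∀ j : ℕ, a ≤ (j : ℤ) → (x i).coeff j = 0)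
    (hx2 : ∀ i, ∀ j : ℤ, 1 ≤ j → j ≤ b → (∑ l, U i l * polyEmb k (x l)).coeff j = 0)
    (hy1 : ∀ i, ∀ j : ℕ, a ≤ (j : ℤ) → (y i).coeff j = 0)
    (hy2 : ∀ i, ∀ j : ℤ, 1 ≤ j → j ≤ b → (∑ l, U i l * polyEmb k (y l)).coeff j = 0) :
    ∑ i, (y i).coeff (a - 1).toNat * (∑ l, U i l * polyEmb k (x l)).coeff (b + 1)
      = ∑ i, (x i).coeff (a - 1).toNat * (∑ l, U i l * polyEmb k (y l)).coeff (b + 1) := by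
  have h1 : (∑ i, polyEmb k (y i) * (∑ l, U i l * polyEmb k (x l))).coeff (b + 2 - a)
      = ∑ i, (y i).coeff (a - 1).toNat * (∑ l, U i l * polyEmb k (x l)).coeff (b + 1) := by
    rw [sum_coeff]
    exact Finset.sum_congr rfl fun i _ =>
      mul_coeff_key a b ha hab (y i) (hy1 i) _ (hx2 i)
  have h2 : (∑ i, polyEmb k (x i) * (∑ l, U i l * polyEmb k (y l))).coeff (b + 2 - a)
      = ∑ i, (x i).coeff (a - 1).toNat * (∑ l, U i l * polyEmb k (y l)).coeff (b + 1) := by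
    rw [sum_coeff]
    exact Finset.sum_congr rfl fun i _ =>
      mul_coeff_key a b ha hab (x i) (hx1 i) _ (hy2 i)
  rw [← h1, ← h2, swap_sum U hU]

/-- `x ↦ ((U x) i).coeff j` as a `k`-linear map. -/
def lamMap (U : Matrix (Fin n) (Fin n) (LaurentSeries k)) (i : Fin n) (j : ℤ) :
    (Fin n → Polynomial k) →ₗ[k] k where
  toFun x := (∑ l, U i l * polyEmb k (x l)).coeff j
  map_add' x y := by
    simp only [Pi.add_apply, map_add, mul_add]
    rw [Finset.sum_add_distrib, HahnSeries.coeff_add]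
  map_smul' c x := by
    simp only [Pi.smul_apply, RingHom.id_apply, smul_eq_mul]
    have h1 : ∀ l, polyEmb k (c • x l) = HahnSeries.single (0 : ℤ) c * polyEmb k (x l) := by
      intro l
      rw [polyEmb_smul, ← HahnSeries.single_zero_mul_eq_smul]
    have h2 : ∀ l, U i l * polyEmb k (c • x l)
        = HahnSeries.single (0 : ℤ) c * (U i l * polyEmb k (x l)) := by
      intro l
      rw [h1 l]
      ring
    rw [Finset.sum_congr rfl fun l _ => h2 l, ← Finset.mul_sum,
      HahnSeries.coeff_single_zero_mul]

lemma lamMap_apply (U : Matrix (Fin n) (Fin n) (LaurentSeries k)) (i : Fin n) (j : ℤ)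
    (x : Fin n → Polynomial k) :
    lamMap U i j x = (∑ l, U i l * polyEmb k (x l)).coeff j := rfl

/-- `x ↦ (x i).coeff m` as a `k`-linear map. -/
def tauMap (i : Fin n) (m : ℕ) : (Fin n → Polynomial k) →ₗ[k] k :=
  (Polynomial.lcoeff k m).comp (LinearMap.proj i)

lemma tauMap_apply (i : Fin n) (m : ℕ) (x : Fin n → Polynomial k) :
    tauMap i m x = (x i).coeff m := rfl

/-- `shrinkSet` as a submodule. -/
def shrinkMod (U : Matrix (Fin n) (Fin n) (LaurentSeries k)) (a b : ℤ) :
    Submodule k (Fin n → Polynomial k) where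
  carrier := shrinkSet U a b
  zero_mem' := by
    constructor
    · intro i j _
      simp
    · intro i j _ _
      show lamMap U i j (0 : Fin n → Polynomial k) = 0
      rw [map_zero]
  add_mem' {x y} hx hy := by
    constructor
    · intro i j hj
      rw [Pi.add_apply, Polynomial.coeff_add, hx.1 i j hj, hy.1 i j hj, add_zero]
    · intro i j h1 h2
      show lamMap U i j (x + y) = 0
      rw [map_add, show lamMap U i j x = 0 from hx.2 i j h1 h2,
        show lamMap U i j y = 0 from hy.2 i j h1 h2, add_zero]
  smul_mem' c x hx := by
    constructor
    · intro i j hj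
      rw [Pi.smul_apply, Polynomial.coeff_smul, hx.1 i j hj, smul_zero]
    · intro i j h1 h2
      show lamMap U i j (c • x) = 0
      rw [map_smul, show lamMap U i j x = 0 from hx.2 i j h1 h2, smul_zero]

lemma shrinkMod_coe (U : Matrix (Fin n) (Fin n) (LaurentSeries k)) (a b : ℤ) :
    (shrinkMod U a b : Set (Fin n → Polynomial k)) = shrinkSet U a b := rfl

/-- The standard symplectic form on `kⁿ × kⁿ`. -/
def omegaForm (k : Type*) [Field k] (n : ℕ) :
    LinearMap.BilinForm k ((Fin n → k) × (Fin n → k)) :=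
  LinearMap.mk₂ k (fun u v => ∑ i, u.1 i * v.2 i - ∑ i, u.2 i * v.1 i)
    (fun u u' v => by
      simp only [Prod.fst_add, Prod.snd_add, Pi.add_apply, add_mul]
      rw [Finset.sum_add_distrib, Finset.sum_add_distrib]
      ring)
    (fun c u v => by
      simp only [Prod.smul_fst, Prod.smul_snd, Pi.smul_apply, smul_eq_mul]
      rw [show ∀ w z : Fin n → k, ∑ i, (c * w i) * z i = c * ∑ i, w i * z i from
        fun w z => by rw [Finset.mul_sum]; exact Finset.sum_congr rfl fun i _ => by ring]
      rw [show ∀ w z : Fin n → k, ∑ i, (c * w i) * z i = c * ∑ i, w i * z i from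
        fun w z => by rw [Finset.mul_sum]; exact Finset.sum_congr rfl fun i _ => by ring]
      ring)
    (fun u v v' => by
      simp only [Prod.fst_add, Prod.snd_add, Pi.add_apply, mul_add]
      rw [Finset.sum_add_distrib, Finset.sum_add_distrib]
      ring)
    (fun c u v => by
      simp only [Prod.smul_fst, Prod.smul_snd, Pi.smul_apply, smul_eq_mul]
      rw [show ∀ w z : Fin n → k, ∑ i, w i * (c * z i) = c * ∑ i, w i * z i from
        fun w z => by rw [Finset.mul_sum]; exact Finset.sum_congr rfl fun i _ => by ring]
      rw [show ∀ w z : Fin n → k, ∑ i, w i * (c * z i) = c * ∑ i, w i * z i from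
        fun w z => by rw [Finset.mul_sum]; exact Finset.sum_congr rfl fun i _ => by ring]
      ring)

lemma omegaForm_apply (u v : (Fin n → k) × (Fin n → k)) :
    omegaForm k n u v = ∑ i, u.1 i * v.2 i - ∑ i, u.2 i * v.1 i := rfl

lemma sum_mul_single (i : Fin n) (w : Fin n → k) :
    ∑ j, w j * (Pi.single i (1 : k) : Fin n → k) j = w i := by
  rw [Finset.sum_eq_single_of_mem i (Finset.mem_univ i)]
  · rw [Pi.single_eq_same, mul_one]
  · intro j _ hj
    rw [Pi.single_eq_of_ne hj, mul_zero]

lemma isotropic_finrank_le (S : Submodule k ((Fin n → k) × (Fin n → k)))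
    (h : ∀ u ∈ S, ∀ v ∈ S, omegaForm k n u v = 0) :
    Module.finrank k S ≤ n := by
  have halt : (omegaForm k n).IsAlt := by
    intro u
    rw [omegaForm_apply]
    rw [show ∑ i, u.2 i * u.1 i = ∑ i, u.1 i * u.2 i from
      Finset.sum_congr rfl fun i _ => mul_comm _ _]
    exact sub_self _
  have hrefl : (omegaForm k n).IsRefl := halt.isRefl
  have hnd : (omegaForm k n).Nondegenerate := by
    refine (LinearMap.IsRefl.nondegenerate_iff_separatingLeft hrefl).mpr ?_
    intro u hu
    have h1 : ∀ i, u.1 i = 0 := by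
      intro i
      have := hu (0, Pi.single i 1)
      rw [omegaForm_apply] at this
      simpa [sum_mul_single] using this
    have h2 : ∀ i, u.2 i = 0 := by
      intro i
      have := hu (Pi.single i 1, 0)
      rw [omegaForm_apply] at this
      simp only [sum_mul_single] at this
      simpa [sum_mul_single] using this
    ext i
    · exact h1 i
    · exact h2 i
  have hle : S ≤ (omegaForm k n).orthogonal S := fun v hv u hu => h u hu v hv
  have main := LinearMap.BilinForm.finrank_add_finrank_orthogonal hrefl S
  rw [LinearMap.BilinForm.orthogonal_top_eq_bot hnd, inf_bot_eq, finrank_bot, add_zero] at main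
  have hmono : Module.finrank k S ≤ Module.finrank k ((omegaForm k n).orthogonal S) :=
    Submodule.finrank_mono hle
  have hV : Module.finrank k ((Fin n → k) × (Fin n → k)) = n + n := by
    rw [Module.finrank_prod, Module.finrank_fin_fun]
  omega

lemma step_lemma (U : Matrix (Fin n) (Fin n) (LaurentSeries k)) (hU : U.IsSymm) (a b : ℤ)
    (hb : 0 < b) :
    Module.rank k (shrinkMod U a b) ≤ Module.rank k (shrinkMod U (a - 1) (b + 1)) +
      ((if b + 2 ≤ a then 2 * n else n : ℕ) : Cardinal) := by
  by_cases ha : a ≤ 0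
  · have hbot : shrinkMod U a b = ⊥ := by
      rw [eq_bot_iff]
      intro x hx
      have hx0 : x = 0 := by
        funext i
        exact Polynomial.ext fun j => by
          rw [hx.1 i j (by omega)]
          simp
      simp [hx0]
    rw [hbot, rank_bot]
    exact zero_le
  push_neg at ha
  have ha1 : 1 ≤ a := by omega
  set W := shrinkMod U a b with hW
  set F : (Fin n → Polynomial k) →ₗ[k] ((Fin n → k) × (Fin n → k)) :=
    LinearMap.prod (LinearMap.pi fun i => tauMap i (a - 1).toNat)
                   (LinearMap.pi fun i => lamMap U i (b + 1)) with hF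
  set f : W →ₗ[k] ((Fin n → k) × (Fin n → k)) := F.comp W.subtype with hf
  have hfapp : ∀ x : W, f x = (fun i => tauMap i (a - 1).toNat (x : Fin n → Polynomial k),
      fun i => lamMap U i (b + 1) (x : Fin n → Polynomial k)) := by
    intro x
    rfl
  have hker : ∀ x : W, f x = 0 → (x : Fin n → Polynomial k) ∈ shrinkMod U (a - 1) (b + 1) := by
    intro x hx0
    obtain ⟨hx1, hx2⟩ := x.2
    rw [hfapp] at hx0
    have h1 : ∀ i, tauMap i (a - 1).toNat (x : Fin n → Polynomial k) = 0 := by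
      intro i
      exact congrFun (congrArg Prod.fst hx0) i
    have h2 : ∀ i, lamMap U i (b + 1) (x : Fin n → Polynomial k) = 0 := by
      intro i
      exact congrFun (congrArg Prod.snd hx0) i
    constructor
    · intro i j hj
      by_cases hja : a ≤ (j : ℤ)
      · exact hx1 i j hja
      · have hje : j = (a - 1).toNat := by omega
        rw [hje]
        exact h1 i
    · intro i j hj1 hj2
      by_cases hjb : j ≤ b
      · exact hx2 i j hj1 hjb
      · have hje : j = b + 1 := by omega
        rw [hje]
        exact h2 i
  have hrank := LinearMap.rank_range_add_rank_ker f
  have hk : Module.rank k (LinearMap.ker f) ≤ Module.rank k (shrinkMod U (a - 1) (b + 1)) := by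
    set g : (LinearMap.ker f) →ₗ[k] (shrinkMod U (a - 1) (b + 1)) :=
      LinearMap.codRestrict _ (W.subtype.comp (LinearMap.ker f).subtype)
        (fun y => hker y.1 y.2) with hg
    have hginj : Function.Injective g := by
      intro u v huv
      have h' := congrArg Subtype.val huv
      exact Subtype.ext (Subtype.ext h')
    exact LinearMap.rank_le_of_injective g hginj
  have hr : Module.rank k (LinearMap.range f)
      ≤ ((if b + 2 ≤ a then 2 * n else n : ℕ) : Cardinal) := by
    rw [← Module.finrank_eq_rank, Nat.cast_le]
    by_cases hba : b + 2 ≤ a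
    · rw [if_pos hba]
      have h1 := Submodule.finrank_le (LinearMap.range f)
      have h2 : Module.finrank k ((Fin n → k) × (Fin n → k)) = n + n := by
        rw [Module.finrank_prod, Module.finrank_fin_fun]
      omega
    · rw [if_neg hba]
      push_neg at hba
      apply isotropic_finrank_le
      rintro u ⟨x, rfl⟩ v ⟨y, rfl⟩
      rw [hfapp, hfapp, omegaForm_apply]
      obtain ⟨hx1, hx2⟩ := x.2
      obtain ⟨hy1, hy2⟩ := y.2
      simp only [tauMap_apply, lamMap_apply]
      rw [sub_eq_zero]
      rw [pairing U hU a b ha1 (by omega) (y : Fin n → Polynomial k)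
        (x : Fin n → Polynomial k) hy1 hy2 hx1 hx2]
      exact Finset.sum_congr rfl fun i _ => mul_comm _ _
  calc Module.rank k W = Module.rank k (LinearMap.range f)
        + Module.rank k (LinearMap.ker f) := hrank.symm
    _ ≤ ((if b + 2 ≤ a then 2 * n else n : ℕ) : Cardinal)
        + Module.rank k (shrinkMod U (a - 1) (b + 1)) := add_le_add hr hk
    _ = _ := add_comm _ _

lemma iter_lemma (U : Matrix (Fin n) (Fin n) (LaurentSeries k)) (hU : U.IsSymm) :
    ∀ (s : ℕ) (a b : ℤ), 0 < b →
    Module.rank k (shrinkMod U a b) ≤ Module.rank k (shrinkMod U (a - s) (b + s)) +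
      ((n * s + n * ((a - b) / 2).toNat : ℕ) : Cardinal) := by
  intro s
  induction s with
  | zero =>
      intro a b hb
      have e1 : a - ((0 : ℕ) : ℤ) = a := by norm_num
      have e2 : b + ((0 : ℕ) : ℤ) = b := by norm_num
      rw [e1, e2]
      exact le_self_add
  | succ s ih =>
      intro a b hb
      have h1 := step_lemma U hU a b hb
      have h2 := ih (a - 1) (b + 1) (by omega)
      have harith : (n * s + n * ((a - 1 - (b + 1)) / 2).toNat)
          + (if b + 2 ≤ a then 2 * n else n)
          ≤ n * (s + 1) + n * ((a - b) / 2).toNat := by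
        by_cases hba : b + 2 ≤ a
        · rw [if_pos hba]
          have hin : ((a - 1 - (b + 1)) / 2).toNat + 2 ≤ 1 + ((a - b) / 2).toNat := by omega
          calc n * s + n * ((a - 1 - (b + 1)) / 2).toNat + 2 * n
              = n * (s + (((a - 1 - (b + 1)) / 2).toNat + 2)) := by ring
            _ ≤ n * (s + (1 + ((a - b) / 2).toNat)) := Nat.mul_le_mul_left n (by omega)
            _ = n * (s + 1) + n * ((a - b) / 2).toNat := by ring
        · rw [if_neg hba]
          have hin : ((a - 1 - (b + 1)) / 2).toNat + 1 ≤ 1 + ((a - b) / 2).toNat := by omega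
          calc n * s + n * ((a - 1 - (b + 1)) / 2).toNat + n
              = n * (s + (((a - 1 - (b + 1)) / 2).toNat + 1)) := by ring
            _ ≤ n * (s + (1 + ((a - b) / 2).toNat)) := Nat.mul_le_mul_left n (by omega)
            _ = n * (s + 1) + n * ((a - b) / 2).toNat := by ring
      have hcast : a - 1 - (s : ℤ) = a - ((s + 1 : ℕ) : ℤ) := by push_cast; ring
      have hcast2 : b + 1 + (s : ℤ) = b + ((s + 1 : ℕ) : ℤ) := by push_cast; ring
      calc Module.rank k (shrinkMod U a b)
          ≤ Module.rank k (shrinkMod U (a - 1) (b + 1))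
            + ((if b + 2 ≤ a then 2 * n else n : ℕ) : Cardinal) := h1
        _ ≤ (Module.rank k (shrinkMod U (a - 1 - s) (b + 1 + s))
            + ((n * s + n * ((a - 1 - (b + 1)) / 2).toNat : ℕ) : Cardinal))
            + ((if b + 2 ≤ a then 2 * n else n : ℕ) : Cardinal) := add_le_add_left h2 _
        _ = Module.rank k (shrinkMod U (a - 1 - s) (b + 1 + s))
            + (((n * s + n * ((a - 1 - (b + 1)) / 2).toNat)
              + (if b + 2 ≤ a then 2 * n else n) : ℕ) : Cardinal) := by
            push_cast
            ring
        _ ≤ Module.rank k (shrinkMod U (a - ((s + 1 : ℕ) : ℤ)) (b + ((s + 1 : ℕ) : ℤ)))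
            + ((n * (s + 1) + n * ((a - b) / 2).toNat : ℕ) : Cardinal) := by
            rw [← hcast, ← hcast2]
            exact add_le_add_right (Nat.cast_le.mpr harith) _

end ShrinkingAux

/-- **Davenport's shrinking lemma over function fields (Lemma A.4).**
For a symmetric matrix `U` over `K∞` and integers `a`, `b > 0`, `s ≥ 0`:
`ν(a,b) ≤ ν(a-s, b+s) + n·s + n·max(⌊(a-b)/2⌋, 0)`, where `ν(a,b)` is the `k`-dimension of
the space of `x ∈ k[t]ⁿ` with `|x| < 2^a` and `‖U x‖ < 2^(-b)`. -/
theorem shrinking_lemma (U : Matrix (Fin n) (Fin n) (LaurentSeries k)) (hU : U.IsSymm)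
    (a b s : ℤ) (hb : 0 < b) (hs : 0 ≤ s) :
    ∀ W₁ W₂ : Submodule k (Fin n → Polynomial k),
      (W₁ : Set (Fin n → Polynomial k)) = shrinkSet U a b →
      (W₂ : Set (Fin n → Polynomial k)) = shrinkSet U (a - s) (b + s) →
      Module.rank k W₁ ≤ Module.rank k W₂ +
        ((n * s.toNat + n * ((a - b) / 2).toNat : ℕ) : Cardinal) := by
  intro W₁ W₂ h₁ h₂
  have e₁ : W₁ = ShrinkingAux.shrinkMod U a b :=
    SetLike.coe_injective (h₁.trans (ShrinkingAux.shrinkMod_coe U a b).symm)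
  have e₂ : W₂ = ShrinkingAux.shrinkMod U (a - s) (b + s) :=
    SetLike.coe_injective (h₂.trans (ShrinkingAux.shrinkMod_coe U (a - s) (b + s)).symm)
  rw [e₁, e₂]
  have h := ShrinkingAux.iter_lemma U hU s.toNat a b hb
  rw [Int.toNat_of_nonneg hs] at h
  exact h

end
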